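/- (Osgood's lemma, zero constant case.) Suppose f(t) ≤ ∫_{t₀}^t γ(s)·g(f(s)) ds for almost every t ∈ [t₀, T], and suppose the Lebesgue integral ∫_{(0, a]} (1/g(r)) dr diverges to +∞. Then f(t) = 0 for almost every t ∈ [t₀, T]. -/

import Mathlib

set_option maxHeartbeats 1000000

open MeasureTheory intervalIntegral

lemma osgood_cover {v : ℕ → ℝ} (hv : Monotone v) (N : ℕ) :
    Set.Ioc (v 0) (v N) ⊆ ⋃ i ∈ Finset.range N, Set.Ioc (v i) (v (i + 1)) := by
  induction N with
  | zero => simp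
  | succ n ih =>
    have hsplit : Set.Ioc (v 0) (v (n + 1)) = Set.Ioc (v 0) (v n) ∪ Set.Ioc (v n) (v (n + 1)) :=
      (Set.Ioc_union_Ioc_eq_Ioc (hv (Nat.zero_le n)) (hv (Nat.le_succ n))).symm
    rw [hsplit]
    rintro x (hx | hx)
    · obtain ⟨i, hi, hxi⟩ := Set.mem_iUnion₂.1 (ih hx)
      exact Set.mem_iUnion₂.2 ⟨i, Finset.mem_range.2 (Nat.lt_succ_of_lt (Finset.mem_range.1 hi)), hxi⟩
    · exact Set.mem_iUnion₂.2 ⟨n, Finset.mem_range.2 (Nat.lt_succ_self n), hx⟩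

theorem osgood_lemma_zero
    (t₀ T a : ℝ) (ht₀ : 0 ≤ t₀) (htT : t₀ < T) (ha : 0 < a)
    (f γ g : ℝ → ℝ)
    (hf_meas : Measurable f) (hf_mem : ∀ t ∈ Set.Icc t₀ T, f t ∈ Set.Icc 0 a)
    (hγ_int : IntegrableOn γ (Set.Icc t₀ T)) (hγ_nonneg : ∀ s ∈ Set.Icc t₀ T, 0 ≤ γ s)
    (hg_cont : ContinuousOn g (Set.Icc 0 a)) (hg_mono : MonotoneOn g (Set.Icc 0 a))
    (hg_nonneg : ∀ r ∈ Set.Icc 0 a, 0 ≤ g r) (hg_pos : ∀ r ∈ Set.Ioc 0 a, 0 < g r)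
    (hg_div : ∫⁻ r in Set.Ioc (0 : ℝ) a, ENNReal.ofReal ((g r)⁻¹) = ⊤)
    (h_ineq : ∀ᵐ t ∂(volume.restrict (Set.Icc t₀ T)),
        f t ≤ ∫ s in t₀..t, γ s * g (f s)) :
    ∀ᵐ t ∂(volume.restrict (Set.Icc t₀ T)), f t = 0 := by
  -- clamp function
  set cl : ℝ → ℝ := fun x => min (max x 0) a with hcl_def
  have hcl_cont : Continuous cl := (continuous_id.max continuous_const).min continuous_const
  have hcl_mem : ∀ x, cl x ∈ Set.Icc 0 a :=
    fun x => ⟨le_min (le_max_right _ _) ha.le, min_le_right _ _⟩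
  have hcl_eq : ∀ x ∈ Set.Icc 0 a, cl x = x := by
    intro x hx; simp only [hcl_def]; rw [max_eq_left hx.1, min_eq_left hx.2]
  set g' : ℝ → ℝ := fun x => g (cl x) with hg'_def
  have hg'_cont : Continuous g' := hg_cont.comp_continuous hcl_cont hcl_mem
  have hg'_eq : ∀ x ∈ Set.Icc 0 a, g' x = g x := by
    intro x hx; simp only [hg'_def]; rw [hcl_eq x hx]
  have hg'_nonneg : ∀ x, 0 ≤ g' x := fun x => hg_nonneg _ (hcl_mem x)
  have hg'_le : ∀ x, g' x ≤ g a :=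
    fun x => hg_mono (hcl_mem x) (Set.right_mem_Icc.2 ha.le) (min_le_right _ _)
  -- the integrand ψ and primitive F
  set ψ : ℝ → ℝ := (Set.Icc t₀ T).indicator (fun s => γ s * g' (f s)) with hψ_def
  have hψ_nonneg : ∀ s, 0 ≤ ψ s := by
    intro s
    by_cases hs : s ∈ Set.Icc t₀ T
    · simp only [hψ_def, Set.indicator_of_mem hs]
      exact mul_nonneg (hγ_nonneg s hs) (hg'_nonneg _)
    · simp [hψ_def, Set.indicator_of_notMem hs]
  have hψ_int : Integrable ψ := by
    apply IntegrableOn.integrable_indicator _ measurableSet_Icc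
    apply Integrable.mono' (hγ_int.const_mul (g a))
    · exact hγ_int.aestronglyMeasurable.mul
        ((hg'_cont.measurable.comp hf_meas).aestronglyMeasurable)
    · filter_upwards [ae_restrict_mem measurableSet_Icc] with s hs
      rw [Real.norm_eq_abs, abs_of_nonneg (mul_nonneg (hγ_nonneg s hs) (hg'_nonneg _))]
      calc γ s * g' (f s) ≤ γ s * g a := by
            exact mul_le_mul_of_nonneg_left (hg'_le _) (hγ_nonneg s hs)
        _ = g a * γ s := mul_comm _ _
  have hψ_ii : ∀ u v : ℝ, IntervalIntegrable ψ volume u v := fun u v => hψ_int.intervalIntegrable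
  set F : ℝ → ℝ := fun t => ∫ s in t₀..t, ψ s with hF_def
  have hF_cont : Continuous F := intervalIntegral.continuous_primitive (fun u v => hψ_ii u v) t₀
  have hF_diff : ∀ u v : ℝ, F v - F u = ∫ s in u..v, ψ s := by
    intro u v
    have h1 := intervalIntegral.integral_add_adjacent_intervals (hψ_ii t₀ u) (hψ_ii u v)
    simp only [hF_def]; linarith
  have hF_mono : Monotone F := by
    intro u v huv
    have h2 : 0 ≤ ∫ s in u..v, ψ s :=
      intervalIntegral.integral_nonneg huv (fun x _ => hψ_nonneg x)
    have := hF_diff u v; linarith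
  have hF0 : F t₀ = 0 := intervalIntegral.integral_same
  have hF_nonneg : ∀ t, t₀ ≤ t → 0 ≤ F t := fun t ht => hF0 ▸ hF_mono ht
  -- γ' and Γ
  set γ' : ℝ → ℝ := (Set.Icc t₀ T).indicator γ with hγ'_def
  have hγ'_nonneg : ∀ s, 0 ≤ γ' s := by
    intro s
    by_cases hs : s ∈ Set.Icc t₀ T
    · simp only [hγ'_def, Set.indicator_of_mem hs]; exact hγ_nonneg s hs
    · simp [hγ'_def, Set.indicator_of_notMem hs]
  have hγ'_int : Integrable γ' := hγ_int.integrable_indicator measurableSet_Icc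
  have hγ'_ii : ∀ u v : ℝ, IntervalIntegrable γ' volume u v := fun u v => hγ'_int.intervalIntegrable
  have hγ'_int_nonneg : ∀ u v : ℝ, u ≤ v → 0 ≤ ∫ s in u..v, γ' s :=
    fun u v huv => intervalIntegral.integral_nonneg huv (fun x _ => hγ'_nonneg x)
  set Γ : ℝ := ∫ s in t₀..T, γ' s with hΓ_def
  have hΓ_bound : ∀ u v : ℝ, t₀ ≤ u → u ≤ v → v ≤ T → ∫ s in u..v, γ' s ≤ Γ := by
    intro u v hu huv hv
    have h1 := intervalIntegral.integral_add_adjacent_intervals (hγ'_ii t₀ u) (hγ'_ii u v)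
    have h2 := intervalIntegral.integral_add_adjacent_intervals (hγ'_ii t₀ v) (hγ'_ii v T)
    have h3 := hγ'_int_nonneg t₀ u hu
    have h4 := hγ'_int_nonneg v T hv
    simp only [hΓ_def]
    rw [← h2, ← h1]
    linarith
  -- a.e. inequality for F
  have hmem_ae : ∀ᵐ t ∂(volume.restrict (Set.Icc t₀ T)), t ∈ Set.Icc t₀ T :=
    ae_restrict_mem measurableSet_Icc
  have h_ineq' : ∀ᵐ t ∂(volume.restrict (Set.Icc t₀ T)), f t ≤ F t := by
    filter_upwards [h_ineq, hmem_ae] with t h1 h2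
    have heq : F t = ∫ s in t₀..t, γ s * g (f s) := by
      apply intervalIntegral.integral_congr
      intro s hs
      rw [Set.uIcc_of_le h2.1] at hs
      have hs' : s ∈ Set.Icc t₀ T := ⟨hs.1, hs.2.trans h2.2⟩
      simp only [hψ_def, Set.indicator_of_mem hs']
      rw [hg'_eq _ (hf_mem s hs')]
    rw [heq]; exact h1
  -- increment bound
  have hincr : ∀ u v : ℝ, t₀ ≤ u → u ≤ v → v ≤ T →
      F v - F u ≤ g' (F v) * ∫ s in u..v, γ' s := by
    intro u v hu huv hv
    rw [hF_diff u v, intervalIntegral.integral_of_le huv]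
    have hsub : Set.Ioc u v ⊆ Set.Icc t₀ T := fun x hx => ⟨hu.trans hx.1.le, hx.2.trans hv⟩
    have hae : ∀ᵐ s ∂(volume.restrict (Set.Ioc u v)), ψ s ≤ g' (F v) * γ' s := by
      filter_upwards [ae_restrict_of_ae_restrict_of_subset hsub h_ineq',
        ae_restrict_mem measurableSet_Ioc] with s h1 h2
      have hs' : s ∈ Set.Icc t₀ T := hsub h2
      have hfs := hf_mem s hs'
      simp only [hψ_def, hγ'_def, Set.indicator_of_mem hs']
      have hgle : g' (f s) ≤ g' (F v) := by
        have hle : f s ≤ cl (F v) := by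
          apply le_min _ hfs.2
          exact le_max_of_le_left (h1.trans (hF_mono h2.2))
        calc g' (f s) = g (f s) := hg'_eq _ hfs
          _ ≤ g (cl (F v)) := hg_mono hfs (hcl_mem _) hle
          _ = g' (F v) := rfl
      calc γ s * g' (f s) ≤ γ s * g' (F v) :=
            mul_le_mul_of_nonneg_left hgle (hγ_nonneg s hs')
        _ = g' (F v) * γ s := mul_comm _ _
    calc ∫ s in Set.Ioc u v, ψ s ≤ ∫ s in Set.Ioc u v, g' (F v) * γ' s :=
          integral_mono_ae hψ_int.integrableOn (hγ'_int.integrableOn.const_mul _) hae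
      _ = g' (F v) * ∫ s in Set.Ioc u v, γ' s := by rw [MeasureTheory.integral_const_mul]
      _ = g' (F v) * ∫ s in u..v, γ' s := by rw [intervalIntegral.integral_of_le huv]
  -- the lintegral integrand
  set G : ℝ → ENNReal := fun r => ENNReal.ofReal ((g' r)⁻¹) with hG_def
  have hG_meas : Measurable G := ENNReal.measurable_ofReal.comp hg'_cont.measurable.inv
  have hdiv' : ∫⁻ r in Set.Ioc (0 : ℝ) a, G r = ⊤ := by
    rw [← hg_div]
    apply setLIntegral_congr_fun measurableSet_Ioc
    intro r hr
    simp only [hG_def]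
    rw [hg'_eq r ⟨hr.1.le, hr.2⟩]
  -- the key claim: F vanishes on [t₀, T]
  have key : ∀ t ∈ Set.Icc t₀ T, F t = 0 := by
    by_contra hcon
    push_neg at hcon
    obtain ⟨tstar, hts, hFts⟩ := hcon
    have hFts_pos : 0 < F tstar := (hF_nonneg tstar hts.1).lt_of_ne (Ne.symm hFts)
    have hmin_mem : min (F tstar) a ∈ Set.Icc (F t₀) (F tstar) := by
      rw [hF0]
      exact ⟨le_min hFts_pos.le ha.le, min_le_left _ _⟩
    obtain ⟨t₁, ht₁_mem, ht₁⟩ := intermediate_value_Icc hts.1 hF_cont.continuousOn hmin_mem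
    set b := F t₁ with hb_def
    have hb_pos : 0 < b := by rw [ht₁]; exact lt_min hFts_pos ha
    have hb_le_a : b ≤ a := by rw [ht₁]; exact min_le_right _ _
    have ht₁T : t₁ ∈ Set.Icc t₀ T := ⟨ht₁_mem.1, ht₁_mem.2.trans hts.2⟩
    set S : Set ℝ := Set.Icc t₀ t₁ ∩ F ⁻¹' {0} with hS_def
    have hS_closed : IsClosed S := isClosed_Icc.inter (isClosed_singleton.preimage hF_cont)
    have hS_ne : S.Nonempty := ⟨t₀, ⟨le_refl _, ht₁T.1⟩, hF0⟩
    have hS_bdd : BddAbove S := ⟨t₁, fun x hx => hx.1.2⟩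
    set t₂ := sSup S with ht₂_def
    have ht₂S : t₂ ∈ S := hS_closed.csSup_mem hS_ne hS_bdd
    have hFt₂ : F t₂ = 0 := ht₂S.2
    have ht₂_lt : t₂ < t₁ := by
      rcases lt_or_eq_of_le ht₂S.1.2 with h | h
      · exact h
      · exfalso; rw [h] at hFt₂; exact hb_pos.ne' hFt₂
    have hFpos : ∀ s, t₂ < s → s ≤ t₁ → 0 < F s := by
      intro s hs1 hs2
      rcases (hF_nonneg s (ht₂S.1.1.trans hs1.le)).lt_or_eq with h | h
      · exact h
      · exact absurd (le_csSup hS_bdd ⟨⟨ht₂S.1.1.trans hs1.le, hs2⟩, h.symm⟩) (not_le.2 hs1)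
    -- core estimate
    have hcore : ∀ t, t₂ < t → t ≤ t₁ →
        ∫⁻ r in Set.Ioc (F t) b, G r ≤ ENNReal.ofReal (2 * Γ) := by
      intro t ht2 ht1
      have ht₀t : t₀ ≤ t := ht₂S.1.1.trans ht2.le
      have hc_pos : 0 < F t := hFpos t ht2 ht1
      have hcb : F t ≤ b := hF_mono ht1
      have hca : F t ≤ a := hcb.trans hb_le_a
      have hgc_pos : 0 < g (F t) := hg_pos _ ⟨hc_pos, hca⟩
      obtain ⟨δ, hδ_pos, hδ⟩ := Metric.uniformContinuousOn_iff.1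
        (isCompact_Icc.uniformContinuousOn_of_continuous hg_cont) (g (F t)) hgc_pos
      obtain ⟨η, hη_pos, hη⟩ := Metric.uniformContinuousOn_iff.1
        ((isCompact_Icc (a := t) (b := t₁)).uniformContinuousOn_of_continuous
          hF_cont.continuousOn) δ hδ_pos
      obtain ⟨N, hN⟩ := exists_nat_gt ((t₁ - t) / η)
      set step := (t₁ - t) / (N + 1) with hstep_def
      have hstep_nonneg : 0 ≤ step := div_nonneg (sub_nonneg.2 ht1) (by positivity)
      have hstep_lt : step < η := by
        rw [hstep_def, div_lt_iff₀ (by positivity)]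
        have h1 : t₁ - t < η * N := by rwa [div_lt_iff₀ hη_pos, mul_comm] at hN
        nlinarith [hη_pos]
      set p : ℕ → ℝ := fun i => t + i * step with hp_def
      have hp0 : p 0 = t := by simp [hp_def]
      have hpN : p (N + 1) = t₁ := by
        simp only [hp_def, hstep_def, Nat.cast_add, Nat.cast_one]
        field_simp
        ring
      have hp_mono : Monotone p := by
        intro i j hij
        simp only [hp_def]
        have hij' : (i:ℝ) ≤ j := by exact_mod_cast hij
        nlinarith
      have hp_mem : ∀ i : ℕ, i ≤ N + 1 → p i ∈ Set.Icc t t₁ := by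
        intro i hi
        constructor
        · simp only [hp_def]
          have : (0:ℝ) ≤ (i:ℝ) := by positivity
          nlinarith
        · rw [← hpN]; exact hp_mono hi
      have hp_step : ∀ i : ℕ, p (i + 1) - p i = step := by
        intro i
        simp only [hp_def, Nat.cast_add, Nat.cast_one]
        ring
      set v : ℕ → ℝ := fun i => F (p i) with hv_def
      have hv_mono : Monotone v := fun i j hij => hF_mono (hp_mono hij)
      have hv0 : v 0 = F t := by rw [hv_def]; simp only; rw [hp0]
      have hvN : v (N + 1) = b := by rw [hv_def]; simp only; rw [hpN]
      have hv_mem : ∀ i : ℕ, i ≤ N + 1 → v i ∈ Set.Icc 0 a := by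
        intro i hi
        constructor
        · have h1 := hv_mono (Nat.zero_le i); rw [hv0] at h1; linarith
        · have h2 := hv_mono hi; rw [hvN] at h2; linarith
      have hgv_pos : ∀ i : ℕ, i ≤ N + 1 → 0 < g (v i) ∧ g (F t) ≤ g (v i) := by
        intro i hi
        have h1 : F t ≤ v i := by have := hv_mono (Nat.zero_le i); rwa [hv0] at this
        have h2 := hg_mono ⟨hc_pos.le, hca⟩ (hv_mem i hi) h1
        exact ⟨lt_of_lt_of_le hgc_pos h2, h2⟩
      have hstep_bound : ∀ i : ℕ, i < N + 1 →
          ∫⁻ r in Set.Ioc (v i) (v (i+1)), G r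
            ≤ ENNReal.ofReal (2 * ∫ s in p i..p (i+1), γ' s) := by
        intro i hi
        have hi1 : i + 1 ≤ N + 1 := hi
        have hii : i ≤ N + 1 := le_of_lt hi
        have hInonneg : 0 ≤ ∫ s in p i..p (i+1), γ' s :=
          hγ'_int_nonneg _ _ (hp_mono (Nat.le_succ i))
        have hFincr : v (i+1) - v i ≤ g (v (i+1)) * ∫ s in p i..p (i+1), γ' s := by
          have h := hincr (p i) (p (i+1)) (ht₀t.trans (hp_mem i hii).1)
            (hp_mono (Nat.le_succ i)) ((hp_mem (i+1) hi1).2.trans ht₁T.2)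
          rwa [hg'_eq _ (hv_mem (i+1) hi1)] at h
        have hdist : dist (p (i+1)) (p i) < η := by
          rw [Real.dist_eq, hp_step i, abs_of_nonneg hstep_nonneg]
          exact hstep_lt
        have hgclose : g (v (i+1)) ≤ 2 * g (v i) := by
          have hd : dist (v (i+1)) (v i) < δ :=
            hη _ (hp_mem (i+1) hi1) _ (hp_mem i hii) hdist
          have hd2 : dist (g (v (i+1))) (g (v i)) < g (F t) :=
            hδ _ (hv_mem (i+1) hi1) _ (hv_mem i hii) hd
          have h3 := (hgv_pos i hii).2
          rw [Real.dist_eq] at hd2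
          have h4 := abs_lt.1 hd2
          linarith [h4.1, h4.2]
        have h1 : ∫⁻ r in Set.Ioc (v i) (v (i+1)), G r
            ≤ ENNReal.ofReal ((g (v i))⁻¹) * volume (Set.Ioc (v i) (v (i+1))) := by
          rw [← setLIntegral_const]
          apply setLIntegral_mono measurable_const
          intro r hr
          have hr_mem : r ∈ Set.Icc 0 a :=
            ⟨(hv_mem i hii).1.trans hr.1.le, hr.2.trans (hv_mem (i+1) hi1).2⟩
          simp only [hG_def]
          apply ENNReal.ofReal_le_ofReal
          rw [hg'_eq r hr_mem]
          exact inv_anti₀ (hgv_pos i hii).1 (hg_mono (hv_mem i hii) hr_mem hr.1.le)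
        rw [Real.volume_Ioc] at h1
        have hgvi := (hgv_pos i hii).1
        calc ∫⁻ r in Set.Ioc (v i) (v (i+1)), G r
            ≤ ENNReal.ofReal ((g (v i))⁻¹) * ENNReal.ofReal (v (i+1) - v i) := h1
          _ = ENNReal.ofReal ((g (v i))⁻¹ * (v (i+1) - v i)) :=
              (ENNReal.ofReal_mul (by positivity)).symm
          _ ≤ ENNReal.ofReal (2 * ∫ s in p i..p (i+1), γ' s) := by
              apply ENNReal.ofReal_le_ofReal
              have hstep1 : (g (v i))⁻¹ * (v (i+1) - v i)
                  ≤ (g (v i))⁻¹ * (g (v (i+1)) * ∫ s in p i..p (i+1), γ' s) :=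
                mul_le_mul_of_nonneg_left hFincr (by positivity)
              have hstep2 : (g (v i))⁻¹ * (g (v (i+1)) * ∫ s in p i..p (i+1), γ' s)
                  ≤ (g (v i))⁻¹ * (2 * g (v i) * ∫ s in p i..p (i+1), γ' s) := by
                apply mul_le_mul_of_nonneg_left _ (by positivity)
                exact mul_le_mul_of_nonneg_right hgclose hInonneg
              have heq : (g (v i))⁻¹ * (2 * g (v i) * ∫ s in p i..p (i+1), γ' s)
                  = 2 * ∫ s in p i..p (i+1), γ' s := by
                field_simp
              linarith
      have hdisj : (↑(Finset.range (N+1)) : Set ℕ).PairwiseDisjoint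
          (fun i => Set.Ioc (v i) (v (i+1))) := by
        intro i _ j _ hij
        have key2 : ∀ i' j' : ℕ, i' < j' →
            Disjoint (Set.Ioc (v i') (v (i'+1))) (Set.Ioc (v j') (v (j'+1))) := by
          intro i' j' hlt
          apply Set.disjoint_left.2
          intro x hxi hxj
          exact absurd hxj.1 (not_lt.2 (hxi.2.trans (hv_mono hlt)))
        rcases hij.lt_or_gt with hlt | hlt
        · exact key2 _ _ hlt
        · exact (key2 _ _ hlt).symm
      have hcov2 : Set.Ioc (F t) b ⊆ ⋃ i ∈ Finset.range (N+1), Set.Ioc (v i) (v (i+1)) := by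
        have h := osgood_cover hv_mono (N+1)
        rwa [hv0, hvN] at h
      calc ∫⁻ r in Set.Ioc (F t) b, G r
          ≤ ∫⁻ r in ⋃ i ∈ Finset.range (N+1), Set.Ioc (v i) (v (i+1)), G r :=
            lintegral_mono_set hcov2
        _ = ∑ i ∈ Finset.range (N+1), ∫⁻ r in Set.Ioc (v i) (v (i+1)), G r :=
            lintegral_biUnion_finset hdisj (fun i _ => measurableSet_Ioc) G
        _ ≤ ∑ i ∈ Finset.range (N+1), ENNReal.ofReal (2 * ∫ s in p i..p (i+1), γ' s) :=
            Finset.sum_le_sum (fun i hi => hstep_bound i (Finset.mem_range.1 hi))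
        _ = ENNReal.ofReal (∑ i ∈ Finset.range (N+1), 2 * ∫ s in p i..p (i+1), γ' s) :=
            (ENNReal.ofReal_sum_of_nonneg (fun i _ =>
              mul_nonneg (by norm_num) (hγ'_int_nonneg _ _ (hp_mono (Nat.le_succ i))))).symm
        _ ≤ ENNReal.ofReal (2 * Γ) := by
            apply ENNReal.ofReal_le_ofReal
            rw [← Finset.mul_sum,
              intervalIntegral.sum_integral_adjacent_intervals (fun k _ => hγ'_ii _ _),
              hp0, hpN]
            have := hΓ_bound t t₁ ht₀t ht1 ht₁T.2
            linarith
    -- sequence tending to t₂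
    set w : ℕ → ℝ := fun n => t₂ + (t₁ - t₂) / (n + 1) with hw_def
    have hw_gt : ∀ n : ℕ, t₂ < w n :=
      fun n => lt_add_of_pos_right _ (div_pos (sub_pos.2 ht₂_lt) (by positivity))
    have hw_le : ∀ n : ℕ, w n ≤ t₁ := by
      intro n
      have h1 : (t₁ - t₂) / (n + 1) ≤ t₁ - t₂ :=
        div_le_self (sub_pos.2 ht₂_lt).le (by exact_mod_cast Nat.one_le_iff_ne_zero.2 (Nat.succ_ne_zero n))
      simp only [hw_def]; linarith
    have hw_anti : ∀ m n : ℕ, m ≤ n → w n ≤ w m := by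
      intro m n hmn
      have h0 : (0:ℝ) ≤ t₁ - t₂ := sub_nonneg.2 ht₂_lt.le
      have hc : (m:ℝ) + 1 ≤ (n:ℝ) + 1 := by exact_mod_cast Nat.succ_le_succ hmn
      simp only [hw_def]
      gcongr
    have hw_tendsto : Filter.Tendsto w Filter.atTop (nhds t₂) := by
      have h1 : Filter.Tendsto (fun n : ℕ => (t₁ - t₂) * (1 / ((n:ℝ) + 1)))
          Filter.atTop (nhds ((t₁ - t₂) * 0)) :=
        tendsto_one_div_add_atTop_nhds_zero_nat.const_mul (t₁ - t₂)
      simp only [mul_zero] at h1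
      have h2 : Filter.Tendsto (fun n : ℕ => t₂ + (t₁ - t₂) * (1 / ((n:ℝ) + 1)))
          Filter.atTop (nhds (t₂ + 0)) := tendsto_const_nhds.add h1
      simp only [add_zero] at h2
      simpa only [hw_def, mul_one_div] using h2
    set u : ℕ → ℝ := fun n => F (w n) with hu_def
    have hu_pos : ∀ n, 0 < u n := fun n => hFpos _ (hw_gt n) (hw_le n)
    have hu_tendsto : Filter.Tendsto u Filter.atTop (nhds 0) := by
      have h := (hF_cont.tendsto t₂).comp hw_tendsto
      rwa [hFt₂] at h
    -- divergence on (0, b]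
    have hdivb : ∫⁻ r in Set.Ioc (0:ℝ) b, G r = ⊤ := by
      have hsplit : Set.Ioc (0:ℝ) a = Set.Ioc 0 b ∪ Set.Ioc b a :=
        (Set.Ioc_union_Ioc_eq_Ioc hb_pos.le hb_le_a).symm
      have htail : ∫⁻ r in Set.Ioc b a, G r ≠ ⊤ := by
        have hgb : 0 < g b := hg_pos b ⟨hb_pos, hb_le_a⟩
        have hle : ∫⁻ r in Set.Ioc b a, G r
            ≤ ENNReal.ofReal ((g b)⁻¹) * volume (Set.Ioc b a) := by
          rw [← setLIntegral_const]
          apply setLIntegral_mono measurable_const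
          intro r hr
          have hr_mem : r ∈ Set.Icc 0 a := ⟨(hb_pos.trans hr.1).le, hr.2⟩
          simp only [hG_def]
          apply ENNReal.ofReal_le_ofReal
          rw [hg'_eq r hr_mem]
          exact inv_anti₀ hgb (hg_mono ⟨hb_pos.le, hb_le_a⟩ hr_mem hr.1.le)
        exact ne_top_of_le_ne_top (ENNReal.mul_ne_top ENNReal.ofReal_ne_top
          (by rw [Real.volume_Ioc]; exact ENNReal.ofReal_ne_top)) hle
      rw [hsplit, lintegral_union measurableSet_Ioc (Set.Ioc_disjoint_Ioc.2 ((min_le_left _ _).trans (le_max_right _ _)))] at hdiv'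
      by_contra hA
      exact (ENNReal.add_ne_top.2 ⟨hA, htail⟩) hdiv'
    -- monotone convergence contradiction
    set hseq : ℕ → ℝ → ENNReal := fun n => (Set.Ioc (u n) b).indicator G with hh_def
    have hh_meas : ∀ n, Measurable (hseq n) := fun n => hG_meas.indicator measurableSet_Ioc
    have hh_mono : Monotone hseq := by
      intro m n hmn x
      exact Set.indicator_le_indicator_of_subset
        (Set.Ioc_subset_Ioc_left (hF_mono (hw_anti m n hmn))) (fun _ => zero_le) x
    have hcov : ∀ x, (Set.Ioc (0:ℝ) b).indicator G x ≤ ⨆ n, hseq n x := by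
      intro x
      by_cases hx : x ∈ Set.Ioc (0:ℝ) b
      · obtain ⟨n, hn⟩ := (hu_tendsto.eventually_lt_const hx.1).exists
        calc (Set.Ioc (0:ℝ) b).indicator G x = G x := Set.indicator_of_mem hx _
          _ = hseq n x := by
              simp only [hh_def]
              rw [Set.indicator_of_mem (show x ∈ Set.Ioc (u n) b from ⟨hn, hx.2⟩)]
          _ ≤ ⨆ n, hseq n x := le_iSup (fun n => hseq n x) n
      · simp [hh_def, Set.indicator_of_notMem hx]
    have hfinal : (⊤ : ENNReal) ≤ ENNReal.ofReal (2 * Γ) := by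
      calc (⊤ : ENNReal) = ∫⁻ r in Set.Ioc (0:ℝ) b, G r := hdivb.symm
        _ = ∫⁻ r, (Set.Ioc (0:ℝ) b).indicator G r := (lintegral_indicator measurableSet_Ioc G).symm
        _ ≤ ∫⁻ r, ⨆ n, hseq n r := lintegral_mono hcov
        _ = ⨆ n, ∫⁻ r, hseq n r := lintegral_iSup hh_meas hh_mono
        _ ≤ ENNReal.ofReal (2 * Γ) := by
            apply iSup_le
            intro n
            rw [hh_def, lintegral_indicator measurableSet_Ioc]
            exact hcore (w n) (hw_gt n) (hw_le n)
    exact ENNReal.ofReal_ne_top (top_le_iff.1 hfinal)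
  filter_upwards [h_ineq', hmem_ae] with t h1 h2
  exact le_antisymm (h1.trans_eq (key t h2)) (hf_mem t h2).1
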